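/- Under the change of basis p' = μp (μ ≠ 0), q' = (1/μ)(−(1/2)g(w,w)p + w + q), E' = {x' = −g(x,w)p + x | x ∈ E}, the components of an algebraic curvature tensor R = R(λ,e,R₀,P,T) of type 𝔤^{1,𝔥} transform as: λ̃ = λ, ẽ = (1/μ)(e − λw)', P̃(x') = (1/μ)(P(x) + R₀(x,w))', and R̃₀(x',y')z' = (R₀(x,y)z)'. In particular, if λ = 0 then ẽ = (1/μ)e', so the class of e modulo positive rescaling and the identification E ≅ E' is determined up to a nonzero real multiple. -/
import Mathlib


open scoped RealInnerProductSpace BigOperators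

noncomputable section

/-- The endomorphism of `ℝ^{1,n+1} = ℝ × ℝⁿ × ℝ` corresponding to `(a, A, X) ∈ 𝔰𝔦𝔪(n)`:
`p ↦ a·p`, `Y ↦ g(X,Y)·p + A·Y`, `q ↦ −X − a·q`. -/
def simMat (n : ℕ) (a : ℝ) (A : EuclideanSpace ℝ (Fin n) →ₗ[ℝ] EuclideanSpace ℝ (Fin n))
    (Xv : EuclideanSpace ℝ (Fin n)) :
    (ℝ × EuclideanSpace ℝ (Fin n) × ℝ) → (ℝ × EuclideanSpace ℝ (Fin n) × ℝ) :=
  fun v => (a * v.1 + ⟪Xv, v.2.1⟫, A v.2.1 - v.2.2 • Xv, -(a * v.2.2))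

/-- The algebraic curvature tensor `R = R(λ, e, R₀, P, T)` of type `𝔤^{1,𝔥}`:
`R(p,q) = (λ,0,e)`, `R(X,Y) = (0, R₀(X,Y), P(Y)X − P(X)Y)`, `R(X,q) = (g(e,X), P(X), T(X))`,
`R(p,X) = 0`, extended bilinearly. -/
def Rfun (n : ℕ) (lam : ℝ) (ev : EuclideanSpace ℝ (Fin n))
    (R0 : EuclideanSpace ℝ (Fin n) →ₗ[ℝ] EuclideanSpace ℝ (Fin n) →ₗ[ℝ]
      EuclideanSpace ℝ (Fin n) →ₗ[ℝ] EuclideanSpace ℝ (Fin n))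
    (P : EuclideanSpace ℝ (Fin n) →ₗ[ℝ]
      EuclideanSpace ℝ (Fin n) →ₗ[ℝ] EuclideanSpace ℝ (Fin n))
    (T : EuclideanSpace ℝ (Fin n) →ₗ[ℝ] EuclideanSpace ℝ (Fin n))
    (U V : ℝ × EuclideanSpace ℝ (Fin n) × ℝ) :
    (ℝ × EuclideanSpace ℝ (Fin n) × ℝ) → (ℝ × EuclideanSpace ℝ (Fin n) × ℝ) :=
  simMat n
    ((U.1 * V.2.2 - U.2.2 * V.1) * lam + V.2.2 * ⟪ev, U.2.1⟫ - U.2.2 * ⟪ev, V.2.1⟫)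
    (R0 U.2.1 V.2.1 + V.2.2 • P U.2.1 - U.2.2 • P V.2.1)
    ((U.1 * V.2.2 - U.2.2 * V.1) • ev + (P V.2.1 U.2.1 - P U.2.1 V.2.1)
      + V.2.2 • T U.2.1 - U.2.2 • T V.2.1)

def lorG (n : ℕ) (u v : ℝ × EuclideanSpace ℝ (Fin n) × ℝ) : ℝ :=
  u.1 * v.2.2 + u.2.2 * v.1 + ⟪u.2.1, v.2.1⟫

set_option maxHeartbeats 4000000 in
/-- Under the change of Witt basis `p' = μ·p`,
`q' = (1/μ)(−(1/2)g(w,w)·p + w + q)`, `E' = {x' = −g(x,w)·p + x | x ∈ E}`, the components of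
`R = R(λ,e,R₀,P,T)` transform as `λ̃ = λ`, `ẽ = (1/μ)(e − λ·w)'`,
`P̃(x')y' = ((1/μ)(P(x) + R₀(x,w))y)'`, `R̃₀(x',y')z' = (R₀(x,y)z)'`.  (Here `λ̃` is read off
from `g(R(p',q')p', q')`, `ẽ = −R(p',q')q' − λ̃·q'`, and `P̃(x')y'`, `R̃₀(x',y')z'` are the
`E'`-components, i.e. the values of `R` with the `p'`-component `g(·,q')·p'` removed.)
In particular, if `λ = 0` then `ẽ = (1/μ)·e'`, so the projection of `e` to `p^⊥/ℝp` is
defined up to a nonzero real multiple. -/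
theorem stmt19 (n : ℕ) (lam : ℝ) (ev : EuclideanSpace ℝ (Fin n))
    (R0 : EuclideanSpace ℝ (Fin n) →ₗ[ℝ] EuclideanSpace ℝ (Fin n) →ₗ[ℝ]
      EuclideanSpace ℝ (Fin n) →ₗ[ℝ] EuclideanSpace ℝ (Fin n))
    (P : EuclideanSpace ℝ (Fin n) →ₗ[ℝ]
      EuclideanSpace ℝ (Fin n) →ₗ[ℝ] EuclideanSpace ℝ (Fin n))
    (T : EuclideanSpace ℝ (Fin n) →ₗ[ℝ] EuclideanSpace ℝ (Fin n))
    (μ : ℝ) (hμ : μ ≠ 0) (w : EuclideanSpace ℝ (Fin n))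
    (p' q' : ℝ × EuclideanSpace ℝ (Fin n) × ℝ)
    (hp' : p' = ((μ : ℝ), (0 : EuclideanSpace ℝ (Fin n)), (0 : ℝ)))
    (hq' : q' = μ⁻¹ • (((-(1 / 2) * ⟪w, w⟫ : ℝ), w, (1 : ℝ))))
    (prm : EuclideanSpace ℝ (Fin n) → ℝ × EuclideanSpace ℝ (Fin n) × ℝ)
    (hprm : ∀ x, prm x = ((-⟪x, w⟫ : ℝ), x, (0 : ℝ))) :
    -- λ̃ = λ
    lorG n (Rfun n lam ev R0 P T p' q' p') q' = lam ∧
    -- ẽ = (1/μ)(e − λw)'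
    -(Rfun n lam ev R0 P T p' q' q') - lam • q' = prm (μ⁻¹ • (ev - lam • w)) ∧
    -- P̃(x') = (1/μ)(P(x) + R₀(x,w))'
    (∀ x y : EuclideanSpace ℝ (Fin n),
      Rfun n lam ev R0 P T (prm x) q' (prm y)
          - (lorG n (Rfun n lam ev R0 P T (prm x) q' (prm y)) q') • p'
        = prm (μ⁻¹ • (P x y + R0 x w y))) ∧
    -- R̃₀(x',y')z' = (R₀(x,y)z)'
    (∀ x y z : EuclideanSpace ℝ (Fin n),
      Rfun n lam ev R0 P T (prm x) (prm y) (prm z)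
          - (lorG n (Rfun n lam ev R0 P T (prm x) (prm y) (prm z)) q') • p'
        = prm (R0 x y z)) ∧
    -- in particular, λ = 0 → ẽ = (1/μ)·e'
    (lam = 0 → -(Rfun n lam ev R0 P T p' q' q') = prm (μ⁻¹ • ev)) := by
  subst hp' hq'
  refine ⟨?_, ?_, ?_, ?_, ?_⟩
  · simp [Rfun, simMat, lorG, Prod.smul_def, smul_eq_mul]
    field_simp
  · simp only [Rfun, simMat, hprm, Prod.smul_mk, smul_eq_mul, Prod.mk.injEq, Prod.neg_mk,
      Prod.mk_sub_mk]
    refine ⟨?_, ?_, ?_⟩ <;>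
      simp [inner_smul_left, inner_smul_right, inner_sub_left, inner_add_left,
        real_inner_comm w ev, smul_smul, smul_sub, smul_add, mul_inv_cancel₀ hμ] <;>
      first
        | module
        | (field_simp <;> ring)
  · intro x y
    simp only [Rfun, simMat, lorG, hprm, Prod.smul_mk, smul_eq_mul, Prod.mk.injEq,
      Prod.neg_mk, Prod.mk_sub_mk, Prod.smul_def]
    refine ⟨?_, ?_, ?_⟩ <;>
      simp [inner_smul_left, inner_smul_right, inner_sub_left, inner_add_left,
        inner_add_right, inner_sub_right, real_inner_comm, smul_smul, smul_sub, smul_add,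
        mul_inv_cancel₀ hμ] <;>
      first
        | module
        | (field_simp <;> ring)
  · intro x y z
    simp only [Rfun, simMat, lorG, hprm, Prod.smul_mk, smul_eq_mul, Prod.mk.injEq,
      Prod.neg_mk, Prod.mk_sub_mk, Prod.smul_def]
    refine ⟨?_, ?_, ?_⟩ <;>
      simp [inner_smul_left, inner_smul_right, inner_sub_left, inner_add_left,
        inner_add_right, inner_sub_right, real_inner_comm, smul_smul, smul_sub, smul_add,
        mul_inv_cancel₀ hμ] <;>
      first
        | module
        | (field_simp <;> ring)
  · intro h
    subst h
    simp only [Rfun, simMat, hprm, Prod.smul_mk, smul_eq_mul, Prod.mk.injEq, Prod.neg_mk]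
    refine ⟨?_, ?_, ?_⟩ <;>
      simp [inner_smul_left, inner_smul_right, inner_sub_left, inner_add_left,
        real_inner_comm w ev, smul_smul, mul_inv_cancel₀ hμ] <;>
      first
        | module
        | (field_simp <;> ring)
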